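/- Let C₁ > 0 and C₂ > 0, and let √ denote the principal complex square root. Then for every complex s not lying in the real ray (−∞, −1/C₁] and with s ≠ −1/ξ_p (where ξ_p := (C₁ + √(C₁² + 4C₂²))/2), one has C₂s + √(1 + C₁s) ≠ 0; consequently P^D(s) := C₂/(C₂s + √(1 + C₁s)) is complex-differentiable (holomorphic) on ℂ ∖ ((−∞, −1/C₁] ∪ {−1/ξ_p}). Moreover C₂·(−1/ξ_p) + √(1 + C₁·(−1/ξ_p)) = 0, so s = −1/ξ_p is an actual singularity of P^D. -/

import Mathlib

/-- The principal branch of the complex square root. -/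
noncomputable def csqrt (z : ℂ) : ℂ := z ^ (1/2 : ℂ)

/-- The pole location ξ_p of the JKD function R^D. -/
noncomputable def xip (C₁ C₂ : ℝ) : ℝ := (C₁ + Real.sqrt (C₁ ^ 2 + 4 * C₂ ^ 2)) / 2

/-- The transformed JKD dynamic permeability. -/
noncomputable def PD (C₁ C₂ : ℝ) (s : ℂ) : ℂ :=
  (C₂ : ℂ) / ((C₂ : ℂ) * s + csqrt (1 + (C₁ : ℂ) * s))

/-- The branch-cut ray (−∞, −1/C₁] viewed inside ℂ. -/
def cutRay (C₁ : ℝ) : Set ℂ := {z : ℂ | z.im = 0 ∧ z.re ≤ -1 / C₁}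

lemma csqrt_mul_self (z : ℂ) : csqrt z * csqrt z = z := by
  unfold csqrt
  rcases eq_or_ne z 0 with rfl | hz
  · simp [Complex.zero_cpow (by norm_num : (1/2:ℂ) ≠ 0)]
  · rw [← Complex.cpow_add _ _ hz]; norm_num

lemma csqrt_ofReal (x : ℝ) (hx : 0 ≤ x) : csqrt (x : ℂ) = (Real.sqrt x : ℂ) := by
  unfold csqrt
  rw [Real.sqrt_eq_rpow, show (1/2 : ℂ) = ((1/2 : ℝ) : ℂ) by norm_num,
    Complex.ofReal_cpow hx]

theorem stmt7 (C₁ C₂ : ℝ) (hC₁ : 0 < C₁) (hC₂ : 0 < C₂) :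
    (∀ s : ℂ, s ∉ cutRay C₁ → s ≠ ((-1 / xip C₁ C₂ : ℝ) : ℂ) →
      (C₂ : ℂ) * s + csqrt (1 + (C₁ : ℂ) * s) ≠ 0) ∧
    DifferentiableOn ℂ (PD C₁ C₂) (cutRay C₁ ∪ {((-1 / xip C₁ C₂ : ℝ) : ℂ)})ᶜ ∧
    (C₂ : ℂ) * ((-1 / xip C₁ C₂ : ℝ) : ℂ) +
      csqrt (1 + (C₁ : ℂ) * ((-1 / xip C₁ C₂ : ℝ) : ℂ)) = 0 := by
  set r : ℝ := xip C₁ C₂ with hrdef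
  have hD : (0:ℝ) ≤ C₁ ^ 2 + 4 * C₂ ^ 2 := by positivity
  have hsq : Real.sqrt (C₁ ^ 2 + 4 * C₂ ^ 2) ^ 2 = C₁ ^ 2 + 4 * C₂ ^ 2 :=
    Real.sq_sqrt hD
  have hr : r ^ 2 = C₁ * r + C₂ ^ 2 := by
    rw [hrdef]; unfold xip; nlinarith [hsq]
  have hrpos : 0 < r := by
    rw [hrdef]; unfold xip
    have := Real.sqrt_nonneg (C₁ ^ 2 + 4 * C₂ ^ 2)
    linarith
  have hrne : (r : ℂ) ≠ 0 := Complex.ofReal_ne_zero.mpr hrpos.ne'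
  have hC₂ne : (C₂ : ℂ) ≠ 0 := Complex.ofReal_ne_zero.mpr hC₂.ne'
  have hrC : (r : ℂ) ^ 2 = (C₁ : ℂ) * r + (C₂ : ℂ) ^ 2 := by exact_mod_cast hr
  -- Part 1
  have part1 : ∀ s : ℂ, s ∉ cutRay C₁ → s ≠ ((-1 / r : ℝ) : ℂ) →
      (C₂ : ℂ) * s + csqrt (1 + (C₁ : ℂ) * s) ≠ 0 := by
    intro s hs hne h
    have h2 : csqrt (1 + (C₁ : ℂ) * s) = -((C₂:ℂ) * s) := by linear_combination h
    have hw : (1 : ℂ) + (C₁:ℂ) * s = (C₂ : ℂ) ^ 2 * s ^ 2 := by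
      calc (1 : ℂ) + (C₁:ℂ) * s
          = csqrt (1 + (C₁ : ℂ) * s) * csqrt (1 + (C₁ : ℂ) * s) :=
            (csqrt_mul_self _).symm
        _ = (C₂ : ℂ) ^ 2 * s ^ 2 := by rw [h2]; ring
    have key : ((C₂:ℂ)^2 * s - r) * ((r:ℂ) * s + 1) = 0 := by
      linear_combination (-(r:ℂ)) * hw + (-s) * hrC
    rcases mul_eq_zero.mp key with hA | hB
    · -- s = r / C₂², positive real: no zero there
      have hsval : s = ((r / C₂ ^ 2 : ℝ) : ℂ) := by
        push_cast
        field_simp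
        linear_combination hA
      set a : ℝ := r / C₂ ^ 2 with hadef
      have hapos : 0 < a := by positivity
      have hwa : (1 : ℂ) + (C₁:ℂ) * s = ((1 + C₁ * a : ℝ) : ℂ) := by
        rw [hsval]; push_cast; ring
      rw [hwa, csqrt_ofReal _ (by positivity), hsval] at h
      have hre : C₂ * a + Real.sqrt (1 + C₁ * a) = 0 := by
        exact_mod_cast h
      nlinarith [Real.sqrt_nonneg (1 + C₁ * a), mul_pos hC₂ hapos]
    · exact hne (by push_cast; field_simp; linear_combination hB)
  refine ⟨part1, ?_, ?_⟩
  · -- Differentiability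
    intro s hs
    simp only [Set.mem_compl_iff, Set.mem_union, Set.mem_singleton_iff, not_or] at hs
    obtain ⟨hs1, hs2⟩ := hs
    have hden : (C₂ : ℂ) * s + csqrt (1 + (C₁ : ℂ) * s) ≠ 0 := part1 s hs1 hs2
    have hslit : (1 + (C₁ : ℂ) * s) ∈ Complex.slitPlane := by
      rw [Complex.mem_slitPlane_iff]
      by_contra hcon
      push_neg at hcon
      obtain ⟨hre, him⟩ := hcon
      simp only [Complex.add_im, Complex.one_im, Complex.mul_im, Complex.ofReal_re,
        Complex.ofReal_im, Complex.add_re, Complex.one_re, Complex.mul_re] at hre him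
      apply hs1
      constructor
      · have h0 : C₁ * s.im = 0 := by linarith
        exact (mul_eq_zero.mp h0).resolve_left hC₁.ne'
      · rw [le_div_iff₀ hC₁]
        nlinarith
    have hd : DifferentiableAt ℂ (fun z => (C₂:ℂ) * z + csqrt (1 + (C₁:ℂ) * z)) s := by
      apply DifferentiableAt.add
      · exact differentiableAt_id.const_mul _
      · have hd2 : DifferentiableAt ℂ (fun z : ℂ => (1 + (C₁:ℂ) * z) ^ (1/2 : ℂ)) s :=
          DifferentiableAt.cpow
            ((differentiableAt_const _).add (differentiableAt_id.const_mul _))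
            (differentiableAt_const _) hslit
        simpa [csqrt] using hd2
    have : DifferentiableAt ℂ (PD C₁ C₂) s := by
      unfold PD
      exact (differentiableAt_const _).div hd hden
    exact this.differentiableWithinAt
  · -- the value at the pole
    have hre : 1 + C₁ * (-1 / r) = C₂ ^ 2 / r ^ 2 := by
      field_simp
      nlinarith [hr]
    have hwa : (1 : ℂ) + (C₁:ℂ) * ((-1 / r : ℝ) : ℂ) = ((1 + C₁ * (-1/r) : ℝ) : ℂ) := by
      push_cast; ring
    rw [hwa, hre, csqrt_ofReal _ (by positivity),
      show C₂ ^ 2 / r ^ 2 = (C₂ / r) ^ 2 by ring, Real.sqrt_sq (by positivity)]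
    push_cast
    field_simp
    ring
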